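/- Fix a real number λ ≠ 0. For every integer n ≥ 0 and every real x, the degenerate falling factorial satisfies (x)_{n,λ} = Σ_{m=0}^{n} G_{m,λ}(x) S^{(2)}_{J,λ}(n,m). -/

import Mathlib

open Finset

/-- The degenerate falling factorial `(x)_{n,λ} = x(x−λ)⋯(x−(n−1)λ)`;
for `lam = 1` it is the ordinary falling factorial `(x)_n`. -/
noncomputable def dff (lam : ℝ) (n : ℕ) (x : ℝ) : ℝ :=
  ∏ i ∈ Finset.range n, (x - i * lam)

/-- The degenerate exponential `e_λ^x(t) = Σ_{n≥0} (x)_{n,λ} t^n/n!`. -/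
noncomputable def degExp (lam x : ℝ) : PowerSeries ℝ :=
  PowerSeries.mk fun n => dff lam n x / n.factorial

/-- The degenerate logarithm `log_λ(1+t) = Σ_{n≥1} λ^{n−1}(1)_{n,1/λ} t^n/n!`. -/
noncomputable def degLog (lam : ℝ) : PowerSeries ℝ :=
  PowerSeries.mk fun n =>
    if n = 0 then 0 else lam ^ (n - 1) * dff (1 / lam) n 1 / n.factorial

/-- Composition `f(g(t))` of formal power series (valid definition of composition
when `g` has zero constant term, as in all uses below). -/
noncomputable def pscomp (f g : PowerSeries ℝ) : PowerSeries ℝ :=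
  PowerSeries.mk fun n =>
    ∑ k ∈ Finset.range (n + 1), (PowerSeries.coeff k f) * (PowerSeries.coeff n (g ^ k))


namespace Aux
open PowerSeries

lemma coeff_pscomp (f g : PowerSeries ℝ) (n : ℕ) :
    coeff n (pscomp f g) = ∑ k ∈ range (n + 1), (coeff k f) * (coeff n (g ^ k)) := by
  simp [pscomp]

lemma coeff_pow_zero {g : PowerSeries ℝ} (hg : constantCoeff g = 0) {n k : ℕ} (h : n < k) :
    coeff n (g ^ k) = 0 := by
  obtain ⟨h', rfl⟩ := (PowerSeries.X_dvd_iff.mpr hg)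
  rw [mul_pow, coeff_X_pow_mul']
  simp [Nat.not_le_of_lt h]

lemma coeff_pscomp' {g : PowerSeries ℝ} (hg : constantCoeff g = 0) (f : PowerSeries ℝ)
    {n N : ℕ} (hN : n < N) :
    coeff n (pscomp f g) = ∑ k ∈ range N, (coeff k f) * (coeff n (g ^ k)) := by
  rw [coeff_pscomp]
  refine Finset.sum_subset (by intro x hx; simp_all; omega) ?_
  intro k hk hk'
  simp only [mem_range, not_lt] at hk'
  rw [coeff_pow_zero hg (by omega), mul_zero]

lemma pscomp_eval₂ {g : PowerSeries ℝ} (hg : constantCoeff g = 0) (f : PowerSeries ℝ)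
    {n N : ℕ} (hN : n < N) :
    coeff n (pscomp f g) = coeff n (Polynomial.eval₂ (C) g (trunc N f)) := by
  obtain ⟨M, rfl⟩ : ∃ M, N = M + 1 := ⟨N - 1, by omega⟩
  have hdeg : (trunc (M + 1) f).natDegree < M + 1 := natDegree_trunc_lt f M
  rw [Polynomial.eval₂_eq_sum_range' (C) hdeg g, coeff_pscomp' hg f hN, map_sum]
  refine Finset.sum_congr rfl fun k hk => ?_
  rw [coeff_trunc, if_pos (mem_range.mp hk), coeff_C_mul]

lemma coeff_eval₂_zero {g : PowerSeries ℝ} (hg : constantCoeff g = 0) (p : Polynomial ℝ)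
    {n N : ℕ} (hN : n < N) (hp : ∀ k, k < N → p.coeff k = 0) :
    coeff n (Polynomial.eval₂ (C) g p) = 0 := by
  rw [Polynomial.eval₂_eq_sum_range, map_sum]
  refine Finset.sum_eq_zero fun k hk => ?_
  rw [coeff_C_mul]
  by_cases h : k < N
  · rw [hp k h, zero_mul]
  · rw [coeff_pow_zero hg (by omega), mul_zero]

lemma coeff_eval₂_congr {g : PowerSeries ℝ} (hg : constantCoeff g = 0) {p q : Polynomial ℝ}
    {n N : ℕ} (hN : n < N) (hpq : ∀ k, k < N → p.coeff k = q.coeff k) :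
    coeff n (Polynomial.eval₂ (C) g p) = coeff n (Polynomial.eval₂ (C) g q) := by
  have : coeff n (Polynomial.eval₂ (C) g (p - q)) = 0 :=
    coeff_eval₂_zero hg _ hN (fun k hk => by simp [hpq k hk])
  rw [Polynomial.eval₂_sub, map_sub, sub_eq_zero] at this
  exact this

lemma pscomp_mul {g : PowerSeries ℝ} (hg : constantCoeff g = 0) (a b : PowerSeries ℝ) :
    pscomp (a * b) g = pscomp a g * pscomp b g := by
  ext n
  set N := n + 1 with hNdef
  have hN : n < N := Nat.lt_succ_self n
  rw [pscomp_eval₂ hg _ hN]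
  have step1 : coeff n (Polynomial.eval₂ (C) g (trunc N (a * b)))
      = coeff n (Polynomial.eval₂ (C) g (trunc N a * trunc N b)) := by
    refine coeff_eval₂_congr hg hN fun k hk => ?_
    have h1 : (trunc N ((trunc N a : PowerSeries ℝ) * (trunc N b : PowerSeries ℝ))).coeff k
        = (trunc N (a * b)).coeff k := by rw [trunc_trunc_mul_trunc]
    rw [coeff_trunc, coeff_trunc, if_pos hk, if_pos hk] at h1
    rw [coeff_trunc, if_pos hk, ← h1, ← Polynomial.coe_mul, Polynomial.coeff_coe]
  rw [step1, Polynomial.eval₂_mul, PowerSeries.coeff_mul, PowerSeries.coeff_mul]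
  refine Finset.sum_congr rfl fun pq hpq => ?_
  have h1 : pq.1 ≤ n := by have := Finset.HasAntidiagonal.mem_antidiagonal.mp hpq; omega
  have h2 : pq.2 ≤ n := by have := Finset.HasAntidiagonal.mem_antidiagonal.mp hpq; omega
  rw [← pscomp_eval₂ hg a (lt_of_le_of_lt h1 hN), ← pscomp_eval₂ hg b (lt_of_le_of_lt h2 hN)]

lemma pscomp_add (f₁ f₂ g : PowerSeries ℝ) :
    pscomp (f₁ + f₂) g = pscomp f₁ g + pscomp f₂ g := by
  ext n
  simp [coeff_pscomp, add_mul, Finset.sum_add_distrib]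

lemma pscomp_C (c : ℝ) (g : PowerSeries ℝ) : pscomp (C c) g = C c := by
  ext n
  rw [coeff_pscomp]
  rcases Nat.eq_zero_or_pos n with rfl | hn
  · simp
  · rw [Finset.sum_eq_zero, PowerSeries.coeff_C, if_neg (by omega)]
    intro k hk
    rcases Nat.eq_zero_or_pos k with rfl | hk'
    · rw [pow_zero, PowerSeries.coeff_one, if_neg (by omega), mul_zero]
    · rw [PowerSeries.coeff_C, if_neg (by omega), zero_mul]

lemma pscomp_one (g : PowerSeries ℝ) : pscomp 1 g = 1 := by
  simpa using pscomp_C 1 g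

lemma pscomp_C_mul (c : ℝ) (f g : PowerSeries ℝ) :
    pscomp (C c * f) g = C c * pscomp f g := by
  ext n
  simp only [coeff_pscomp, PowerSeries.coeff_C_mul, Finset.mul_sum, mul_assoc]

lemma pscomp_X {g : PowerSeries ℝ} (hg : constantCoeff g = 0) : pscomp X g = g := by
  ext n
  rw [coeff_pscomp' hg X (show n < n + 2 by omega)]
  rw [Finset.sum_eq_single 1]
  · simp
  · intro k hk hk1
    rw [PowerSeries.coeff_X, if_neg hk1, zero_mul]
  · intro h
    simp at h

lemma pscomp_X_right (f : PowerSeries ℝ) : pscomp f X = f := by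
  ext n
  rw [coeff_pscomp, Finset.sum_eq_single n]
  · simp [X_pow_eq, PowerSeries.coeff_monomial]
  · intro k hk hkn
    rw [X_pow_eq, PowerSeries.coeff_monomial, if_neg (fun h => hkn h.symm), mul_zero]
  · intro h
    simp at h

lemma pscomp_pow {g : PowerSeries ℝ} (hg : constantCoeff g = 0) (f : PowerSeries ℝ) (m : ℕ) :
    pscomp (f ^ m) g = (pscomp f g) ^ m := by
  induction m with
  | zero => simpa using pscomp_one g
  | succ m ih => rw [pow_succ, pow_succ, pscomp_mul hg, ih]

lemma constantCoeff_pscomp {g : PowerSeries ℝ} (hg : constantCoeff g = 0) (f : PowerSeries ℝ) :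
    constantCoeff (pscomp f g) = constantCoeff f := by
  have := coeff_pscomp f g 0
  simpa [coeff_zero_eq_constantCoeff] using this

lemma pscomp_assoc {g h : PowerSeries ℝ} (hg : constantCoeff g = 0)
    (hh : constantCoeff h = 0) (f : PowerSeries ℝ) :
    pscomp (pscomp f g) h = pscomp f (pscomp g h) := by
  ext n
  rw [coeff_pscomp, coeff_pscomp]
  have key : ∀ k ∈ range (n + 1), coeff k (pscomp f g) * coeff n (h ^ k)
      = ∑ j ∈ range (n + 1), coeff j f * (coeff k (g ^ j) * coeff n (h ^ k)) := by
    intro k hk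
    rw [coeff_pscomp' hg f (mem_range.mp hk), Finset.sum_mul]
    simp [mul_assoc]
  rw [Finset.sum_congr rfl key, Finset.sum_comm]
  refine Finset.sum_congr rfl fun j hj => ?_
  rw [← Finset.mul_sum, ← coeff_pscomp, pscomp_pow hh]

noncomputable def Bi (a : ℝ) : PowerSeries ℝ := PowerSeries.mk fun n => Ring.choose a n

lemma coeff_Bi (a : ℝ) (n : ℕ) : coeff n (Bi a) = Ring.choose a n := by simp [Bi]

lemma Bi_mul (a b : ℝ) : Bi a * Bi b = Bi (a + b) := by
  ext n
  rw [PowerSeries.coeff_mul, coeff_Bi, Ring.add_choose_eq n (Commute.all a b)]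
  exact Finset.sum_congr rfl fun pq _ => by rw [coeff_Bi, coeff_Bi]

lemma constantCoeff_Bi (a : ℝ) : constantCoeff (Bi a) = 1 := by
  have := coeff_Bi a 0
  rw [coeff_zero_eq_constantCoeff] at this
  rw [this, Ring.choose_zero_right]

lemma Bi_one_eq : Bi 1 = 1 + X := by
  ext n
  rw [coeff_Bi, map_add, PowerSeries.coeff_one, PowerSeries.coeff_X]
  have h1 : (1 : ℝ) = ((1 : ℕ) : ℝ) := by norm_num
  rw [h1, Ring.choose_natCast]
  match n with
  | 0 => norm_num
  | 1 => norm_num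
  | (k + 2) => rw [Nat.choose_eq_zero_of_lt (by omega), if_neg (by omega), if_neg (by omega)]; norm_num

lemma Bi_pow (b : ℝ) (m : ℕ) : (Bi b) ^ m = Bi (m * b) := by
  induction m with
  | zero =>
    ext n
    rw [pow_zero, coeff_Bi, Nat.cast_zero, zero_mul]
    have h0 : (0 : ℝ) = ((0 : ℕ) : ℝ) := by norm_num
    rw [h0, Ring.choose_natCast, PowerSeries.coeff_one]
    match n with
    | 0 => norm_num
    | k + 1 => rw [Nat.choose_eq_zero_of_lt (by omega)]; norm_num
  | succ m ih =>
    rw [pow_succ, ih, Bi_mul]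
    push_cast
    ring_nf

lemma desc_smeval_prod (a : ℝ) : ∀ n : ℕ,
    Polynomial.smeval (descPochhammer ℤ n) a = ∏ i ∈ range n, (a - i) := by
  intro n
  induction n with
  | zero => simp [descPochhammer_zero, Polynomial.smeval_one]
  | succ n ih =>
    rw [descPochhammer_succ_right, Polynomial.smeval_mul, ih, Finset.prod_range_succ]
    congr 1
    rw [Polynomial.smeval_sub, Polynomial.smeval_X, Polynomial.smeval_natCast]
    simp

lemma choose_eq_prod (a : ℝ) (n : ℕ) :
    Ring.choose a n = (∏ i ∈ range n, (a - i)) / n.factorial := by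
  have h := Ring.descPochhammer_eq_factorial_smul_choose (R := ℝ) a n
  rw [desc_smeval_prod] at h
  rw [h, nsmul_eq_mul]
  field_simp

lemma Bi_comp (b a : ℝ) : pscomp (Bi a) (Bi b - 1) = Bi (a * b) := by
  have hg0 : constantCoeff (Bi b - 1) = 0 := by
    rw [map_sub, constantCoeff_Bi]; simp
  ext n
  set g := Bi b - 1 with hgdef
  let P : Polynomial ℝ := ∑ k ∈ range (n + 1),
    Polynomial.C (coeff n (g ^ k) / k.factorial) * ∏ i ∈ range k, (Polynomial.X - Polynomial.C (i : ℝ))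
  let Q : Polynomial ℝ := Polynomial.C ((n.factorial : ℝ))⁻¹ *
    ∏ i ∈ range n, (Polynomial.C b * Polynomial.X - Polynomial.C (i : ℝ))
  have hP : ∀ t : ℝ, P.eval t = coeff n (pscomp (Bi t) g) := by
    intro t
    rw [coeff_pscomp]
    simp only [P, Polynomial.eval_finset_sum, Polynomial.eval_mul, Polynomial.eval_C,
      Polynomial.eval_prod, Polynomial.eval_sub, Polynomial.eval_X]
    refine Finset.sum_congr rfl fun k _ => ?_
    rw [coeff_Bi, choose_eq_prod]
    ring
  have hQ : ∀ t : ℝ, Q.eval t = Ring.choose (t * b) n := by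
    intro t
    simp only [Q, Polynomial.eval_mul, Polynomial.eval_C, Polynomial.eval_prod,
      Polynomial.eval_sub, Polynomial.eval_X]
    have hpr : ∏ i ∈ range n, (b * t - (i:ℝ)) = ∏ i ∈ range n, (t * b - (i:ℝ)) :=
      Finset.prod_congr rfl fun i _ => by ring
    rw [choose_eq_prod, hpr, div_eq_inv_mul]
  have hPQ : P = Q := by
    apply Polynomial.eq_of_infinite_eval_eq
    apply Set.Infinite.mono (s := Set.range (Nat.cast : ℕ → ℝ))
    · rintro _ ⟨m, rfl⟩
      have hnat : pscomp (Bi (m : ℝ)) g = Bi ((m : ℝ) * b) := by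
        have h1 : Bi (m : ℝ) = (1 + X) ^ m := by
          rw [← Bi_one_eq, Bi_pow, mul_one]
        rw [h1, pscomp_pow hg0]
        have h2 : pscomp (1 + X) g = Bi b := by
          rw [pscomp_add, pscomp_one, pscomp_X hg0, hgdef]
          ring
        rw [h2, Bi_pow]
      simp only [Set.mem_setOf_eq]
      rw [hP, hQ, hnat, coeff_Bi]
    · exact Set.infinite_range_of_injective Nat.cast_injective
  rw [← hP a, hPQ, hQ a, coeff_Bi, mul_comm a b]

lemma pscomp_rescale (f g : PowerSeries ℝ) (c : ℝ) :
    pscomp f (PowerSeries.rescale c g) = PowerSeries.rescale c (pscomp f g) := by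
  ext n
  rw [coeff_rescale, coeff_pscomp, coeff_pscomp, Finset.mul_sum]
  refine Finset.sum_congr rfl fun k _ => ?_
  rw [← map_pow, coeff_rescale]
  ring

lemma prod_scale {lam : ℝ} (hlam : lam ≠ 0) (c : ℝ) (n : ℕ) :
    ∏ i ∈ range n, (lam * c - i * lam) = lam ^ n * ∏ i ∈ range n, (c - i) := by
  have h : ∀ i ∈ range n, lam * c - i * lam = lam * (c - i) := fun i _ => by ring
  rw [Finset.prod_congr rfl h, Finset.prod_mul_distrib, Finset.prod_const, Finset.card_range]

lemma degExp_eq {lam : ℝ} (hlam : lam ≠ 0) :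
    degExp lam 1 = PowerSeries.rescale lam (Bi (1 / lam)) := by
  ext n
  rw [degExp, coeff_mk, coeff_rescale, coeff_Bi, choose_eq_prod]
  have h1 : dff lam n 1 = lam ^ n * ∏ i ∈ range n, (1 / lam - i) := by
    rw [dff, ← prod_scale hlam]
    exact Finset.prod_congr rfl fun i _ => by field_simp
  rw [h1]
  ring

lemma degLog_eq {lam : ℝ} (hlam : lam ≠ 0) :
    degLog lam = C (1 / lam) * (Bi lam - 1) := by
  ext n
  rw [degLog, coeff_mk, PowerSeries.coeff_C_mul, map_sub, coeff_Bi]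
  rcases Nat.eq_zero_or_pos n with rfl | hn
  · rw [if_pos rfl, Ring.choose_zero_right, PowerSeries.coeff_one]
    norm_num
  · rw [if_neg (by omega), PowerSeries.coeff_one, if_neg (by omega), sub_zero, choose_eq_prod]
    have h1 : dff (1 / lam) n 1 = (1 / lam) ^ n * ∏ i ∈ range n, (lam - i) := by
      have h2 := prod_scale (lam := 1 / lam) (by simpa using hlam) lam n
      rw [dff, ← h2]
      refine Finset.prod_congr rfl fun i _ => by field_simp
    rw [h1]
    have hln : lam ^ (n - 1) * ((1 / lam) ^ n * ∏ i ∈ range n, (lam - i))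
        = (1 / lam) * ∏ i ∈ range n, (lam - i) := by
      obtain ⟨m, rfl⟩ : ∃ m, n = m + 1 := ⟨n - 1, by omega⟩
      rw [Nat.add_sub_cancel]
      rw [pow_succ, ← mul_assoc, ← mul_assoc, ← mul_pow, mul_one_div_cancel hlam, one_pow, one_mul]
    rw [hln]
    ring

lemma constantCoeff_degExp (lam x : ℝ) : constantCoeff (degExp lam x - 1) = 0 := by
  rw [map_sub, ← coeff_zero_eq_constantCoeff, degExp, coeff_mk]
  simp [dff]

lemma constantCoeff_degLog (lam : ℝ) : constantCoeff (degLog lam) = 0 := by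
  rw [← coeff_zero_eq_constantCoeff, degLog, coeff_mk]
  simp

lemma degLog_comp_degExp {lam : ℝ} (hlam : lam ≠ 0) :
    pscomp (degLog lam) (degExp lam 1 - 1) = X := by
  have hE0 := constantCoeff_degExp lam 1
  have hsplit : degExp lam 1 - 1 = PowerSeries.rescale lam (Bi (1 / lam) - 1) := by
    rw [map_sub, map_one, degExp_eq hlam]
  rw [degLog_eq hlam, pscomp_C_mul]
  have hBl : pscomp (Bi lam - 1) (degExp lam 1 - 1) = pscomp (Bi lam) (degExp lam 1 - 1) - 1 := by
    have : Bi lam = (Bi lam - 1) + 1 := by ring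
    nth_rewrite 2 [this]
    rw [pscomp_add, pscomp_one]
    ring
  rw [hBl, hsplit, pscomp_rescale, Bi_comp, mul_one_div_cancel hlam]
  rw [Bi_one_eq, map_add, map_one, rescale_X]
  have : (1 / lam) * lam = 1 := by field_simp
  rw [show (1 : PowerSeries ℝ) + C lam * X - 1 = C lam * X by ring, ← mul_assoc, ← map_mul,
    this, map_one, one_mul]

end Aux

open Aux PowerSeries in
theorem degenerate_falling_via_gaenari_jindalrae2 (lam : ℝ) (hlam : lam ≠ 0)
    (SJ2 : ℕ → ℕ → ℝ) (G : ℕ → ℝ → ℝ)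
    (hSJ2 : ∀ k : ℕ, (PowerSeries.C ((k.factorial : ℝ))⁻¹) * (pscomp (degExp lam 1) (degExp lam 1 - 1) - 1) ^ k = PowerSeries.mk (fun n => if k ≤ n then SJ2 n k / n.factorial else 0))
    (hG : ∀ x : ℝ, pscomp (degExp lam x) (pscomp (degLog lam) (degLog lam)) = PowerSeries.mk (fun n => G n x / n.factorial))
    : ∀ (n : ℕ) (x : ℝ), dff lam n x = ∑ m ∈ Finset.range (n + 1), G m x * SJ2 n m := by
  intro n x
  set E := degExp lam 1 with hE
  set Λ := degLog lam with hΛ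
  set F := degExp lam x with hF
  set L := pscomp Λ Λ with hL
  set H := pscomp E (E - 1) with hH
  have hE0 : constantCoeff (E - 1) = 0 := constantCoeff_degExp lam 1
  have hΛ0 : constantCoeff Λ = 0 := constantCoeff_degLog lam
  have hL0 : constantCoeff L = 0 := by
    rw [hL, constantCoeff_pscomp hΛ0, hΛ0]
  have hH1 : H - 1 = pscomp (E - 1) (E - 1) := by
    have h : E = (E - 1) + 1 := by ring
    rw [hH]
    nth_rewrite 1 [h]
    rw [pscomp_add, pscomp_one]
    ring
  have hH0 : constantCoeff (H - 1) = 0 := by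
    rw [hH1, constantCoeff_pscomp hE0, hE0]
  have step1 : pscomp Λ (H - 1) = E - 1 := by
    rw [hH1, ← pscomp_assoc hE0 hE0, degLog_comp_degExp hlam, pscomp_X hE0]
  have step2 : pscomp L (H - 1) = X := by
    rw [hL, pscomp_assoc hΛ0 hH0, step1, degLog_comp_degExp hlam]
  have main : pscomp (pscomp F L) (H - 1) = F := by
    rw [pscomp_assoc hL0 hH0, step2, pscomp_X_right]
  -- coefficient extraction
  have hGm : ∀ m : ℕ, G m x = m.factorial * coeff m (pscomp F L) := by
    intro m
    have := congrArg (coeff m) (hG x)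
    rw [coeff_mk] at this
    rw [this]
    field_simp
  have hSm : ∀ m : ℕ, m ≤ n →
      SJ2 n m = n.factorial * ((m.factorial : ℝ))⁻¹ * coeff n ((H - 1) ^ m) := by
    intro m hm
    have := congrArg (coeff n) (hSJ2 m)
    rw [coeff_mk, PowerSeries.coeff_C_mul, if_pos hm] at this
    have hn0 : (n.factorial : ℝ) ≠ 0 := Nat.cast_ne_zero.mpr n.factorial_ne_zero
    field_simp at this ⊢
    rw [← this]
  have key := coeff_pscomp (pscomp F L) (H - 1) n
  rw [main] at key
  have hdffF : dff lam n x = n.factorial * coeff n F := by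
    rw [hF, degExp, coeff_mk]
    field_simp
  rw [hdffF, key, Finset.mul_sum]
  refine Finset.sum_congr rfl fun m hm => ?_
  rw [hGm m, hSm m (by simpa using Nat.lt_succ_iff.mp (Finset.mem_range.mp hm))]
  have hm0 : (m.factorial : ℝ) ≠ 0 := Nat.cast_ne_zero.mpr m.factorial_ne_zero
  field_simp
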